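/- (Hoffman–Wielandt inequality) For Hermitian matrices $A, B \in M_n(\mathbb{C})$ with eigenvalues $\lambda_1^A \le \cdots \le \lambda_n^A$ and $\lambda_1^B \le \cdots \le \lambda_n^B$ respectively, one has $\sum_{i=1}^n |\lambda_i^A - \lambda_i^B|^2 \le \|A - B\|_{HS}^2$, where $\|M\|_{HS} = \sqrt{\operatorname{tr}(M M^*)}$. -/

import Mathlib

open Matrix Finset

private lemma hw_norm_sq_eq_re_mul_conj (z : ℂ) : ‖z‖^2 = (z * (starRingEnd ℂ) z).re := by
  rw [Complex.mul_conj']; norm_cast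

private lemma hw_re_term (a b : ℝ) (z : ℂ) :
    ((a:ℂ) * z * b * (starRingEnd ℂ) z).re = a * b * ‖z‖^2 := by
  rw [show (a:ℂ) * z * b * (starRingEnd ℂ) z = (a * b : ℂ) * (z * (starRingEnd ℂ) z) by ring,
    Complex.mul_conj']
  norm_cast

private lemma hw_ds_rearrange {n : ℕ} (lamA lamB : Fin n → ℝ) (hmA : Monotone lamA)
    (hmB : Monotone lamB) (s : Matrix (Fin n) (Fin n) ℝ) (hs : s ∈ doublyStochastic ℝ (Fin n)) :
    ∑ i, ∑ j, lamA i * lamB j * s i j ≤ ∑ i, lamA i * lamB i := by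
  obtain ⟨w, hw0, hw1, hwsum⟩ := exists_eq_sum_perm_of_mem_doublyStochastic hs
  have hmono : Monovary lamA lamB := hmA.monovary hmB
  have hentry : ∀ i j, s i j = ∑ σ : Equiv.Perm (Fin n), w σ * (if σ i = j then (1:ℝ) else 0) := by
    intro i j
    rw [← hwsum]
    simp [Matrix.sum_apply, Equiv.Perm.permMatrix, PEquiv.toMatrix_apply, Equiv.toPEquiv_apply,
      eq_comm]
  have h1 : ∀ i, (∑ j, lamA i * lamB j * s i j)
      = ∑ σ : Equiv.Perm (Fin n), w σ * (lamA i * lamB (σ i)) := by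
    intro i
    simp only [hentry, Finset.mul_sum]
    rw [Finset.sum_comm]
    refine Finset.sum_congr rfl fun σ _ => ?_
    rw [Finset.sum_eq_single (σ i)] <;> simp +contextual [eq_comm]
    ring
  calc ∑ i, ∑ j, lamA i * lamB j * s i j
      = ∑ σ : Equiv.Perm (Fin n), w σ * ∑ i, lamA i * lamB (σ i) := by
        simp only [h1, Finset.mul_sum]
        rw [Finset.sum_comm]
    _ ≤ ∑ σ : Equiv.Perm (Fin n), w σ * ∑ i, lamA i * lamB i := by
        refine Finset.sum_le_sum fun σ _ => mul_le_mul_of_nonneg_left ?_ (hw0 σ)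
        exact hmono.sum_mul_comp_perm_le_sum_mul
    _ = ∑ i, lamA i * lamB i := by rw [← Finset.sum_mul, hw1, one_mul]

private lemma hw_trace_mul_repr {n : ℕ} (A B : Matrix (Fin n) (Fin n) ℂ) (hA : A.IsHermitian)
    (hB : B.IsHermitian) :
    ∃ s ∈ doublyStochastic ℝ (Fin n),
      (A * B).trace.re = ∑ i, ∑ j, hA.eigenvalues i * hB.eigenvalues j * s i j := by
  have hU := (hA.eigenvectorUnitary).2
  have hV := (hB.eigenvectorUnitary).2
  set U : Matrix (Fin n) (Fin n) ℂ := (hA.eigenvectorUnitary : Matrix (Fin n) (Fin n) ℂ)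
  set V : Matrix (Fin n) (Fin n) ℂ := (hB.eigenvectorUnitary : Matrix (Fin n) (Fin n) ℂ)
  have hWmem : star U * V ∈ Matrix.unitaryGroup (Fin n) ℂ :=
    mul_mem (Unitary.star_mem hU) hV
  refine ⟨Matrix.of fun i j => ‖(star U * V) i j‖^2, ?_, ?_⟩
  · rw [mem_doublyStochastic_iff_sum]
    refine ⟨fun i j => by simp only [Matrix.of_apply]; positivity, fun i => ?_, fun j => ?_⟩
    · have h1 : ((star U * V) * star (star U * V)) i i = 1 := by
        rw [mem_unitaryGroup_iff.mp hWmem]; simp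
      have h2 := congrArg Complex.re h1
      rw [Matrix.mul_apply, Complex.re_sum] at h2
      simp only [Matrix.of_apply, hw_norm_sq_eq_re_mul_conj]
      simpa [Matrix.star_apply] using h2
    · have h1 : (star (star U * V) * (star U * V)) j j = 1 := by
        rw [mem_unitaryGroup_iff'.mp hWmem]; simp
      have h2 := congrArg Complex.re h1
      rw [Matrix.mul_apply, Complex.re_sum] at h2
      simp only [Matrix.of_apply, hw_norm_sq_eq_re_mul_conj]
      simp only [Matrix.star_apply, mul_comm] at h2 ⊢
      simpa using h2
  · set D : Matrix (Fin n) (Fin n) ℂ := diagonal (RCLike.ofReal ∘ hA.eigenvalues) with hD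
    set E : Matrix (Fin n) (Fin n) ℂ := diagonal (RCLike.ofReal ∘ hB.eigenvalues) with hE
    have htr : (A * B).trace = (D * (star U * V) * E * (star V * U)).trace := by
      nth_rewrite 1 [show A = U * D * star U from hA.spectral_theorem,
        show B = V * E * star V from hB.spectral_theorem]
      rw [show (U * D * star U) * (V * E * star V) = U * (D * (star U * V) * E * star V) from by
        simp only [Matrix.mul_assoc]]
      rw [Matrix.trace_mul_comm]
      rw [show (D * (star U * V) * E * star V) * U = D * (star U * V) * E * (star V * U) from by
        simp only [Matrix.mul_assoc]]
    have hdiag : ∀ i, (D * (star U * V) * E * (star V * U)) i i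
        = ∑ j, (hA.eigenvalues i : ℂ) * (star U * V) i j * (hB.eigenvalues j : ℂ)
            * (starRingEnd ℂ) ((star U * V) i j) := by
      intro i
      rw [show star V * U = star (star U * V) from by simp]
      rw [Matrix.mul_apply]
      refine Finset.sum_congr rfl fun j _ => ?_
      rw [Matrix.mul_diagonal, Matrix.diagonal_mul, Matrix.star_apply]
      simp [RCLike.star_def]
    rw [htr, Matrix.trace, Complex.re_sum]
    refine Finset.sum_congr rfl fun i _ => ?_
    rw [Matrix.diag_apply, hdiag, Complex.re_sum]
    refine Finset.sum_congr rfl fun j _ => ?_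
    rw [hw_re_term]
    simp

private lemma hw_trace_sq_re {n : ℕ} (A : Matrix (Fin n) (Fin n) ℂ) (hA : A.IsHermitian) :
    (A * A).trace.re = ∑ i, hA.eigenvalues i ^ 2 := by
  have hU := (hA.eigenvectorUnitary).2
  set U : Matrix (Fin n) (Fin n) ℂ := (hA.eigenvectorUnitary : Matrix (Fin n) (Fin n) ℂ)
  set D : Matrix (Fin n) (Fin n) ℂ := diagonal (RCLike.ofReal ∘ hA.eigenvalues) with hD
  have hUU : star U * U = 1 := mem_unitaryGroup_iff'.mp hU
  have hAeq : A = U * D * star U := hA.spectral_theorem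
  have htr : (A * A).trace = (D * D).trace := by
    rw [hAeq]
    rw [show (U * D * star U) * (U * D * star U) = U * (D * (star U * U) * D * star U) from by
      simp only [Matrix.mul_assoc]]
    rw [hUU, Matrix.mul_one, Matrix.trace_mul_comm]
    rw [show (D * D * star U) * U = D * D * (star U * U) from by simp only [Matrix.mul_assoc]]
    rw [hUU, Matrix.mul_one]
  rw [htr, hD, diagonal_mul_diagonal, Matrix.trace_diagonal, Complex.re_sum]
  refine Finset.sum_congr rfl fun i _ => ?_
  simp [sq]

theorem stmt1 {n : ℕ} (A B : Matrix (Fin n) (Fin n) ℂ)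
    (hA : A.IsHermitian) (hB : B.IsHermitian)
    (lamA lamB : Fin n → ℝ) (hmA : Monotone lamA) (hmB : Monotone lamB)
    (hpA : ∃ σ : Equiv.Perm (Fin n), lamA = hA.eigenvalues ∘ σ)
    (hpB : ∃ σ : Equiv.Perm (Fin n), lamB = hB.eigenvalues ∘ σ) :
    ∑ i : Fin n, |lamA i - lamB i| ^ 2 ≤ ((A - B) * (A - B)ᴴ).trace.re := by
  obtain ⟨σ, hσ⟩ := hpA
  obtain ⟨τ, hτ⟩ := hpB
  obtain ⟨s, hs, hsrepr⟩ := hw_trace_mul_repr A B hA hB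
  -- conjugated doubly stochastic matrix
  set s' : Matrix (Fin n) (Fin n) ℝ := Matrix.of fun i j => s (σ i) (τ j) with hs'
  have hs'mem : s' ∈ doublyStochastic ℝ (Fin n) := by
    rw [mem_doublyStochastic_iff_sum] at hs ⊢
    obtain ⟨h0, hr, hc⟩ := hs
    refine ⟨fun i j => h0 _ _, fun i => ?_, fun j => ?_⟩
    · rw [show ∑ j, s' i j = ∑ j, s (σ i) (τ j) from rfl]
      rw [Equiv.sum_comp τ (fun j => s (σ i) j)]
      exact hr _
    · rw [show ∑ i, s' i j = ∑ i, s (σ i) (τ j) from rfl]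
      rw [Equiv.sum_comp σ (fun i => s i (τ j))]
      exact hc _
  have key : (A * B).trace.re ≤ ∑ i, lamA i * lamB i := by
    rw [hsrepr]
    have hre : ∑ i, ∑ j, hA.eigenvalues i * hB.eigenvalues j * s i j
        = ∑ i, ∑ j, lamA i * lamB j * s' i j := by
      rw [← Equiv.sum_comp σ (fun i => ∑ j, hA.eigenvalues i * hB.eigenvalues j * s i j)]
      refine Finset.sum_congr rfl fun i _ => ?_
      rw [← Equiv.sum_comp τ (fun j => hA.eigenvalues (σ i) * hB.eigenvalues j * s (σ i) j)]
      refine Finset.sum_congr rfl fun j _ => ?_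
      simp [hσ, hτ, hs']
    rw [hre]
    exact hw_ds_rearrange lamA lamB hmA hmB s' hs'mem
  have hAA : (A * A).trace.re = ∑ i, lamA i ^ 2 := by
    rw [hw_trace_sq_re A hA, ← Equiv.sum_comp σ (fun i => hA.eigenvalues i ^ 2)]
    refine Finset.sum_congr rfl fun i _ => ?_
    rw [hσ]; rfl
  have hBB : (B * B).trace.re = ∑ i, lamB i ^ 2 := by
    rw [hw_trace_sq_re B hB, ← Equiv.sum_comp τ (fun i => hB.eigenvalues i ^ 2)]
    refine Finset.sum_congr rfl fun i _ => ?_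
    rw [hτ]; rfl
  have hherm : (A - B)ᴴ = A - B := hA.sub hB
  rw [hherm]
  have hexp : (A - B) * (A - B) = A * A - A * B - B * A + B * B := by noncomm_ring
  have htr : ((A - B) * (A - B)).trace.re
      = (A * A).trace.re - (A * B).trace.re - (B * A).trace.re + (B * B).trace.re := by
    rw [hexp]
    simp [Matrix.trace_add, Matrix.trace_sub]
  have hBA : (B * A).trace.re = (A * B).trace.re := by rw [Matrix.trace_mul_comm]
  have hLHS : ∑ i : Fin n, |lamA i - lamB i| ^ 2
      = ∑ i, lamA i ^ 2 + ∑ i, lamB i ^ 2 - 2 * ∑ i, lamA i * lamB i := by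
    rw [← Finset.sum_add_distrib, Finset.mul_sum, ← Finset.sum_sub_distrib]
    refine Finset.sum_congr rfl fun i _ => ?_
    rw [sq_abs]
    ring
  rw [hLHS, htr, hAA, hBB, hBA]
  linarith
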